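/- Let s, t be real numbers with 0 < t < 1/2 ≤ s < 1 and s + t > 1. Then the supremum of log(y⁻¹ − 1)/(y − x) over all pairs (x, y) with 1/2 ≤ x ≤ s, 0 < y ≤ 1 − x, and y ≤ t equals log(t⁻¹ − 1)/(2t − 1). -/

import Mathlib

open Set

private lemma aux_hasDeriv (y : ℝ) (hy0 : 0 < y) (hy1 : y < 1) :
    HasDerivAt (fun z : ℝ => Real.log (1 - z) - Real.log z) (-(1 - y)⁻¹ - y⁻¹) y := by
  have h1 : HasDerivAt (fun z : ℝ => 1 - z) (-1) y := by
    simpa using (hasDerivAt_id y).const_sub 1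
  have h2 : HasDerivAt (fun z : ℝ => Real.log (1 - z)) (-(1 - y)⁻¹) y := by
    have := (Real.hasDerivAt_log (by linarith : (1:ℝ) - y ≠ 0)).comp y h1
    simpa [Function.comp_def] using this
  exact h2.sub (Real.hasDerivAt_log (ne_of_gt hy0))

private lemma aux_convex :
    ConvexOn ℝ (Set.Ioc (0:ℝ) (1/2)) (fun z : ℝ => Real.log (1 - z) - Real.log z) := by
  have hint : interior (Set.Ioc (0:ℝ) (1/2)) = Set.Ioo 0 (1/2) := interior_Ioc
  apply MonotoneOn.convexOn_of_deriv (convex_Ioc _ _)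
  · apply ContinuousOn.sub
    · exact Real.continuousOn_log.comp (continuousOn_const.sub continuousOn_id)
        (fun z hz => by
          simp only [Set.mem_compl_iff, Set.mem_singleton_iff]
          have := hz.2; intro h; linarith)
    · exact Real.continuousOn_log.mono (fun z hz => by
        simp only [Set.mem_compl_iff, Set.mem_singleton_iff]; exact ne_of_gt hz.1)
  · rw [hint]
    intro z hz
    exact (aux_hasDeriv z hz.1 (by linarith [hz.2])).differentiableAt.differentiableWithinAt
  · rw [hint]
    intro a ha b hb hab
    rw [(aux_hasDeriv a ha.1 (by linarith [ha.2])).deriv,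
        (aux_hasDeriv b hb.1 (by linarith [hb.2])).deriv]
    have ha0 := ha.1
    have ha1 : a < 1/2 := ha.2
    have hb0 := hb.1
    have hb1 : b < 1/2 := hb.2
    have ha' : a ≠ 0 := ne_of_gt ha0
    have ha'' : 1 - a ≠ 0 := by intro h; linarith
    have hb' : b ≠ 0 := ne_of_gt hb0
    have hb'' : 1 - b ≠ 0 := by intro h; linarith
    have e1 : -(1 - a)⁻¹ - a⁻¹ = -(1/(a*(1-a))) := by
      field_simp
      ring
    have e2 : -(1 - b)⁻¹ - b⁻¹ = -(1/(b*(1-b))) := by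
      field_simp
      ring
    rw [e1, e2, neg_le_neg_iff]
    apply one_div_le_one_div_of_le (by nlinarith)
    nlinarith

private lemma aux_key (y t : ℝ) (hy : 0 < y) (hyt : y ≤ t) (ht2 : t < 1/2) :
    Real.log (t⁻¹ - 1) * (1 - 2*y) ≤ Real.log (y⁻¹ - 1) * (1 - 2*t) := by
  have ht0 : 0 < t := lt_of_lt_of_le hy hyt
  have hfy : Real.log (y⁻¹ - 1) = Real.log (1 - y) - Real.log y := by
    rw [show y⁻¹ - 1 = (1 - y)/y by field_simp, Real.log_div (by intro h; nlinarith) (ne_of_gt hy)]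
  have hft : Real.log (t⁻¹ - 1) = Real.log (1 - t) - Real.log t := by
    rw [show t⁻¹ - 1 = (1 - t)/t by field_simp, Real.log_div (by intro h; nlinarith) (ne_of_gt ht0)]
  rcases eq_or_lt_of_le hyt with rfl | hlt
  · exact le_of_eq (by ring)
  have hsec := aux_convex.secant_mono (a := 1/2) (x := y) (y := t)
    ⟨by norm_num, le_refl _⟩ ⟨hy, by linarith⟩ ⟨ht0, by linarith⟩
    (by intro h; rw [h] at hlt; linarith) (ne_of_lt ht2) hyt
  have hf12 : Real.log (1 - (1/2:ℝ)) - Real.log (1/2:ℝ) = 0 := by norm_num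
  rw [hf12, sub_zero, sub_zero] at hsec
  set Fy := Real.log (1 - y) - Real.log y with hFy
  set Ft := Real.log (1 - t) - Real.log t with hFt
  have hp : (0:ℝ) < 1/2 - y := by linarith
  have hq : (0:ℝ) < 1/2 - t := by linarith
  have h1 : Fy / (y - 1/2) = -(Fy / (1/2 - y)) := by
    rw [show y - 1/2 = -(1/2 - y) by ring, div_neg]
  have h2 : Ft / (t - 1/2) = -(Ft / (1/2 - t)) := by
    rw [show t - 1/2 = -(1/2 - t) by ring, div_neg]
  rw [h1, h2, neg_le_neg_iff] at hsec
  rw [div_le_div_iff₀ hq hp] at hsec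
  rw [hfy, hft]
  nlinarith [hsec]

theorem sup_region_minus_case2 (s t : ℝ) (ht : 0 < t) (ht2 : t < 1 / 2)
    (hs : 1 / 2 ≤ s) (hs1 : s < 1) (hst : s + t > 1) :
    sSup {r : ℝ | ∃ x y : ℝ, 1 / 2 ≤ x ∧ x ≤ s ∧ 0 < y ∧ y ≤ 1 - x ∧ y ≤ t ∧
      r = Real.log (y⁻¹ - 1) / (y - x)} = Real.log (t⁻¹ - 1) / (2 * t - 1) := by
  apply IsGreatest.csSup_eq
  constructor
  · exact ⟨1 - t, t, by linarith, by linarith, ht, by linarith, le_refl t, by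
      rw [show t - (1 - t) = 2 * t - 1 by ring]⟩
  · rintro r ⟨x, y, hx1, hx2, hy0, hy1, hyt, rfl⟩
    have hyx : y - x < 0 := by linarith
    have h2t : 2 * t - 1 < 0 := by linarith
    have hLt : 0 ≤ Real.log (t⁻¹ - 1) := by
      apply Real.log_nonneg
      rw [le_sub_iff_add_le]
      rw [le_inv_comm₀ (by norm_num) ht]
      linarith
    have hLy : 0 ≤ Real.log (y⁻¹ - 1) := by
      apply Real.log_nonneg
      rw [le_sub_iff_add_le]
      rw [le_inv_comm₀ (by norm_num) hy0]
      linarith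
    have h1 : Real.log (y⁻¹ - 1) / (y - x) = -(Real.log (y⁻¹ - 1) / (x - y)) := by
      rw [show y - x = -(x - y) by ring, div_neg]
    have h2 : Real.log (t⁻¹ - 1) / (2 * t - 1) = -(Real.log (t⁻¹ - 1) / (1 - 2*t)) := by
      rw [show 2 * t - 1 = -(1 - 2*t) by ring, div_neg]
    rw [h1, h2, neg_le_neg_iff, div_le_div_iff₀ (by linarith) (by linarith)]
    calc Real.log (t⁻¹ - 1) * (x - y) ≤ Real.log (t⁻¹ - 1) * (1 - 2*y) := by
          apply mul_le_mul_of_nonneg_left (by linarith) hLt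
      _ ≤ Real.log (y⁻¹ - 1) * (1 - 2*t) := aux_key y t hy0 hyt (by linarith)
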